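/- Fix real numbers t and y₀ with (2t·y₀ − y₀² + 1) ≠ 0, (3t²y₀² + 2√3·t²y₀ − 3t² + 8t·y₀ − y₀² + 2√3·y₀ + 1) ≠ 0, and (3t²y₀² − 2√3·t²y₀ − 3t² + 8t·y₀ − y₀² − 2√3·y₀ + 1) ≠ 0. With P, Q, R, 𝒦 as in the setup and V = (0, y₀), define P'' = ((3t²−1)(y₀²+1)/((t²+1)(2t·y₀−y₀²+1)), 2(t²y₀+2t−y₀)(t·y₀−1)/((t²+1)(2t·y₀−y₀²+1))), Q'' = (−2(3√3·t³+3t²−√3·t−1)(y₀²+1)/((3t²y₀²+2√3·t²y₀−3t²+8t·y₀−y₀²+2√3·y₀+1)(t²+1)), −(√3·t⁴y₀²+6t⁴y₀−2t³y₀²+3√3·t⁴−8√3·t²y₀²+6t³+4t²y₀−10t·y₀²−4√3·t²−√3·y₀²−2t−2y₀+√3)/((3t²y₀²+2√3·t²y₀−3t²+8t·y₀−y₀²+2√3·y₀+1)(t²+1))), and R'' = (2(3√3·t³−3t²−√3·t+1)(y₀²+1)/((3t²y₀²−2√3·t²y₀−3t²+8t·y₀−y₀²−2√3·y₀+1)(t²+1)),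 (√3·t⁴y₀²−6t⁴y₀+2t³y₀²+3√3·t⁴−8√3·t²y₀²−6t³−4t²y₀+10t·y₀²−4√3·t²−√3·y₀²+2t+2y₀+√3)/((3t²y₀²−2√3·t²y₀−3t²+8t·y₀−y₀²−2√3·y₀+1)(t²+1))). Then P'', Q'', R'' each satisfy the equation of 𝒦, and the point V = (0, y₀) lies on each of the lines PP'', QQ'', RR''. -/

import Mathlib

open Complex

/-- Abbreviation for `√3`. -/
noncomputable def sqrt3 : ℝ := Real.sqrt 3

/-- `P = (−1 + 2(1−t²)/(1+t²), 4t/(1+t²))`, a point of the circle of center `(-1,0)`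
and radius `2`. -/
noncomputable def Pt (t : ℝ) : ℂ :=
  ⟨-1 + 2 * (1 - t ^ 2) / (1 + t ^ 2), 4 * t / (1 + t ^ 2)⟩

/-- `Q = (−2(√3·t+1)/(t²+1), −(√3·t²+2t−√3)/(t²+1))`, obtained from `P` by a `120°`
rotation about `(-1,0)`. -/
noncomputable def Qt (t : ℝ) : ℂ :=
  ⟨-2 * (sqrt3 * t + 1) / (t ^ 2 + 1), -(sqrt3 * t ^ 2 + 2 * t - sqrt3) / (t ^ 2 + 1)⟩

/-- `R = (2(√3·t−1)/(t²+1), (√3·t²−2t−√3)/(t²+1))`, obtained from `Q` by a `120°`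
rotation about `(-1,0)`. -/
noncomputable def Rt (t : ℝ) : ℂ :=
  ⟨2 * (sqrt3 * t - 1) / (t ^ 2 + 1), (sqrt3 * t ^ 2 - 2 * t - sqrt3) / (t ^ 2 + 1)⟩

/-- The point `z` lies on the conic `𝒦 : (3t²−1)x² + (2t³−6t)xy + (1−3t²)y² + (1−3t²) = 0`. -/
def OnK (t : ℝ) (z : ℂ) : Prop :=
  (3 * t ^ 2 - 1) * z.re ^ 2 + (2 * t ^ 3 - 6 * t) * z.re * z.im +
    (1 - 3 * t ^ 2) * z.im ^ 2 + (1 - 3 * t ^ 2) = 0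

/-- First nonvanishing denominator factor `2t·y₀ − y₀² + 1`. -/
noncomputable def D₀ (t y : ℝ) : ℝ := 2 * t * y - y ^ 2 + 1

/-- Second nonvanishing denominator factor
`3t²y₀² + 2√3·t²y₀ − 3t² + 8t·y₀ − y₀² + 2√3·y₀ + 1`. -/
noncomputable def D₁ (t y : ℝ) : ℝ :=
  3 * t ^ 2 * y ^ 2 + 2 * sqrt3 * t ^ 2 * y - 3 * t ^ 2 + 8 * t * y - y ^ 2 + 2 * sqrt3 * y + 1

/-- Third nonvanishing denominator factor
`3t²y₀² − 2√3·t²y₀ − 3t² + 8t·y₀ − y₀² − 2√3·y₀ + 1`. -/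
noncomputable def D₂ (t y : ℝ) : ℝ :=
  3 * t ^ 2 * y ^ 2 - 2 * sqrt3 * t ^ 2 * y - 3 * t ^ 2 + 8 * t * y - y ^ 2 - 2 * sqrt3 * y + 1

/-- The point `P''` of the setup of Theorem 2. -/
noncomputable def Ppp (t y : ℝ) : ℂ :=
  ⟨(3 * t ^ 2 - 1) * (y ^ 2 + 1) / ((t ^ 2 + 1) * D₀ t y),
   2 * (t ^ 2 * y + 2 * t - y) * (t * y - 1) / ((t ^ 2 + 1) * D₀ t y)⟩

/-- The point `Q''` of the setup of Theorem 2. -/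
noncomputable def Qpp (t y : ℝ) : ℂ :=
  ⟨-2 * (3 * sqrt3 * t ^ 3 + 3 * t ^ 2 - sqrt3 * t - 1) * (y ^ 2 + 1) / (D₁ t y * (t ^ 2 + 1)),
   -(sqrt3 * t ^ 4 * y ^ 2 + 6 * t ^ 4 * y - 2 * t ^ 3 * y ^ 2 + 3 * sqrt3 * t ^ 4
     - 8 * sqrt3 * t ^ 2 * y ^ 2 + 6 * t ^ 3 + 4 * t ^ 2 * y - 10 * t * y ^ 2
     - 4 * sqrt3 * t ^ 2 - sqrt3 * y ^ 2 - 2 * t - 2 * y + sqrt3) / (D₁ t y * (t ^ 2 + 1))⟩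

/-- The point `R''` of the setup of Theorem 2. -/
noncomputable def Rpp (t y : ℝ) : ℂ :=
  ⟨2 * (3 * sqrt3 * t ^ 3 - 3 * t ^ 2 - sqrt3 * t + 1) * (y ^ 2 + 1) / (D₂ t y * (t ^ 2 + 1)),
   (sqrt3 * t ^ 4 * y ^ 2 - 6 * t ^ 4 * y + 2 * t ^ 3 * y ^ 2 + 3 * sqrt3 * t ^ 4
     - 8 * sqrt3 * t ^ 2 * y ^ 2 - 6 * t ^ 3 - 4 * t ^ 2 * y + 10 * t * y ^ 2
     - 4 * sqrt3 * t ^ 2 - sqrt3 * y ^ 2 + 2 * t + 2 * y + sqrt3) / (D₂ t y * (t ^ 2 + 1))⟩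


lemma collinear_of_det {a b c : ℂ}
    (h : (b - a).re * (c - a).im - (b - a).im * (c - a).re = 0) :
    Collinear ℝ ({a, b, c} : Set ℂ) := by
  by_cases hb : b = a
  · have hset : ({a, b, c} : Set ℂ) = {a, c} := by rw [hb]; simp
    rw [hset]
    exact collinear_pair ℝ a c
  · have hne : (b - a).re ^ 2 + (b - a).im ^ 2 ≠ 0 := by
      intro hz
      apply hb
      have h1 : (b - a).re = 0 := by nlinarith [sq_nonneg (b-a).re, sq_nonneg (b-a).im]
      have h2 : (b - a).im = 0 := by nlinarith [sq_nonneg (b-a).re, sq_nonneg (b-a).im]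
      exact sub_eq_zero.mp (Complex.ext h1 h2)
    apply (collinear_iff_of_mem (Set.mem_insert a _)).2
    refine ⟨b - a, fun p hp => ?_⟩
    have key : ∀ r : ℝ, p - a = r • (b - a) → ∃ r : ℝ, p = r • (b - a) +ᵥ a := by
      intro r hr
      exact ⟨r, by rw [vadd_eq_add, ← hr]; abel⟩
    rcases hp with rfl | rfl | rfl
    · exact key 0 (by simp)
    · exact key 1 (by simp)
    · simp only [Complex.sub_re, Complex.sub_im] at h hne
      apply key (((p - a).re * (b - a).re + (p - a).im * (b - a).im) /
        ((b - a).re ^ 2 + (b - a).im ^ 2))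
      apply Complex.ext
      · rw [Complex.smul_re]
        simp only [Complex.sub_re, Complex.sub_im]
        rw [smul_eq_mul, div_mul_eq_mul_div, eq_div_iff hne]
        linear_combination (-(b.im - a.im)) * h
      · rw [Complex.smul_im]
        simp only [Complex.sub_re, Complex.sub_im]
        rw [smul_eq_mul, div_mul_eq_mul_div, eq_div_iff hne]
        linear_combination (b.re - a.re) * h

lemma onK_div (t a b d : ℝ) (hd : d ≠ 0)
    (h : (3 * t ^ 2 - 1) * a ^ 2 + (2 * t ^ 3 - 6 * t) * a * b
      + (1 - 3 * t ^ 2) * b ^ 2 + (1 - 3 * t ^ 2) * d ^ 2 = 0) :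
    OnK t ⟨a / d, b / d⟩ := by
  unfold OnK
  simp only
  have key : (3 * t ^ 2 - 1) * (a / d) ^ 2 + (2 * t ^ 3 - 6 * t) * (a / d) * (b / d) +
      (1 - 3 * t ^ 2) * (b / d) ^ 2 + (1 - 3 * t ^ 2) =
      ((3 * t ^ 2 - 1) * a ^ 2 + (2 * t ^ 3 - 6 * t) * a * b
      + (1 - 3 * t ^ 2) * b ^ 2 + (1 - 3 * t ^ 2) * d ^ 2) / d ^ 2 := by
    field_simp
  rw [key, h, zero_div]

lemma collinear_div (y a b d p1 p2 e : ℝ) (hd : d ≠ 0) (he : e ≠ 0)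
    (h : (a * e - p1 * d) * (y * e - p2) + (b * e - p2 * d) * p1 = 0) :
    Collinear ℝ ({(⟨p1 / e, p2 / e⟩ : ℂ), (⟨a / d, b / d⟩ : ℂ), (⟨0, y⟩ : ℂ)} : Set ℂ) := by
  apply collinear_of_det
  simp only [Complex.sub_re, Complex.sub_im]
  have key : (a / d - p1 / e) * (y - p2 / e) - (b / d - p2 / e) * (0 - p1 / e) =
      ((a * e - p1 * d) * (y * e - p2) + (b * e - p2 * d) * p1) / (d * e ^ 2) := by
    field_simp
    ring
  exact key.trans (by rw [h, zero_div])


set_option maxHeartbeats 1000000 in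
/-- The points `P'', Q'', R''` lie on the conic `𝒦`, and `V = (0, y₀)` lies on each of the
lines `PP''`, `QQ''`, `RR''`. -/
theorem second_intersections_on_conic_and_lines (t y₀ : ℝ)
    (h₀ : D₀ t y₀ ≠ 0) (h₁ : D₁ t y₀ ≠ 0) (h₂ : D₂ t y₀ ≠ 0) :
    OnK t (Ppp t y₀) ∧ OnK t (Qpp t y₀) ∧ OnK t (Rpp t y₀) ∧
    Collinear ℝ ({Pt t, Ppp t y₀, (⟨0, y₀⟩ : ℂ)} : Set ℂ) ∧
    Collinear ℝ ({Qt t, Qpp t y₀, (⟨0, y₀⟩ : ℂ)} : Set ℂ) ∧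
    Collinear ℝ ({Rt t, Rpp t y₀, (⟨0, y₀⟩ : ℂ)} : Set ℂ) := by
  have ht : (t ^ 2 + 1 : ℝ) ≠ 0 := by positivity
  have ht1 : (1 + t ^ 2 : ℝ) ≠ 0 := by positivity
  have hs : sqrt3 ^ 2 = 3 := Real.sq_sqrt (by norm_num)
  have hP : Pt t = ⟨(-(1 + t ^ 2) + 2 * (1 - t ^ 2)) / (1 + t ^ 2), 4 * t / (1 + t ^ 2)⟩ := by
    unfold Pt
    apply Complex.ext
    · simp only
      field_simp
    · rfl
  refine ⟨?_, ?_, ?_, ?_, ?_, ?_⟩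
  · unfold Ppp
    exact onK_div t _ _ _ (mul_ne_zero ht h₀) (by unfold D₀; ring)
  · unfold Qpp
    exact onK_div t _ _ _ (mul_ne_zero h₁ ht) (by unfold D₁; linear_combination ((9 : ℝ) * t^10 * y₀^4 + (18 : ℝ) * t^10 * y₀^2 + (9 : ℝ) * t^10 + (21 : ℝ) * t^8 * y₀^4 + (42 : ℝ) * t^8 * y₀^2 + (21 : ℝ) * t^8 + (10 : ℝ) * t^6 * y₀^4 + (20 : ℝ) * t^6 * y₀^2 + (10 : ℝ) * t^6 + (-6 : ℝ) * t^4 * y₀^4 + (-12 : ℝ) * t^4 * y₀^2 + (-6 : ℝ) * t^4 + (-3 : ℝ) * t^2 * y₀^4 + (-6 : ℝ) * t^2 * y₀^2 + (-3 : ℝ) * t^2 + y₀^4 + (2 : ℝ) * y₀^2 + (1 : ℝ)) * hs)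
  · unfold Rpp
    exact onK_div t _ _ _ (mul_ne_zero h₂ ht) (by unfold D₂; linear_combination ((9 : ℝ) * t^10 * y₀^4 + (18 : ℝ) * t^10 * y₀^2 + (9 : ℝ) * t^10 + (21 : ℝ) * t^8 * y₀^4 + (42 : ℝ) * t^8 * y₀^2 + (21 : ℝ) * t^8 + (10 : ℝ) * t^6 * y₀^4 + (20 : ℝ) * t^6 * y₀^2 + (10 : ℝ) * t^6 + (-6 : ℝ) * t^4 * y₀^4 + (-12 : ℝ) * t^4 * y₀^2 + (-6 : ℝ) * t^4 + (-3 : ℝ) * t^2 * y₀^4 + (-6 : ℝ) * t^2 * y₀^2 + (-3 : ℝ) * t^2 + y₀^4 + (2 : ℝ) * y₀^2 + (1 : ℝ)) * hs)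
  · rw [hP]
    unfold Ppp
    exact collinear_div y₀ _ _ _ _ _ _ (mul_ne_zero ht h₀) ht1 (by unfold D₀; ring)
  · unfold Qt Qpp
    exact collinear_div y₀ _ _ _ _ _ _ (mul_ne_zero h₁ ht) ht (by unfold D₁; ring)
  · unfold Rt Rpp
    exact collinear_div y₀ _ _ _ _ _ _ (mul_ne_zero h₂ ht) ht (by unfold D₂; ring)
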